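/- On a locally finite weighted graph, for adjacent vertices x ~ y, the Ollivier curvature κ(x,y) = inf ∇_{xy}Δf can be computed by taking the infimum only over integer-valued 1-Lipschitz functions f on B_1(x) ∪ B_1(y) with f(y) - f(x) = 1. Consequently, on a combinatorial graph (all edge weights in {0,1} and m ≡ 1), κ(x,y) is an integer for all x ~ y. -/

import Mathlib

open scoped BigOperators

/-- A locally finite weighted graph. -/
structure WeightedGraph (V : Type) where
  w : V → V → ℝ
  m : V → ℝ
  symm : ∀ x y, w x y = w y x
  loopless : ∀ x, w x x = 0
  nonneg : ∀ x y, 0 ≤ w x y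
  mpos : ∀ x, 0 < m x
  locFin : ∀ x, Set.Finite {y | w x y ≠ 0}

namespace WeightedGraph

variable {V : Type} (G : WeightedGraph V)

/-- The underlying simple graph. -/
def toSimple : SimpleGraph V where
  Adj x y := x ≠ y ∧ G.w x y ≠ 0
  symm := by
    constructor
    intro x y h
    exact ⟨h.1.symm, by rw [G.symm y x]; exact h.2⟩
  loopless := by constructor; intro x h; exact h.1 rfl

/-- The combinatorial graph distance. -/
noncomputable def dist (x y : V) : ℕ := G.toSimple.dist x y

/-- The graph Laplacian. -/
noncomputable def lap (f : V → ℝ) (x : V) : ℝ :=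
  (∑ᶠ y, G.w x y * (f y - f x)) / G.m x

/-- The weighted vertex degree. -/
noncomputable def deg (x : V) : ℝ := (∑ᶠ y, G.w x y) / G.m x

/-- `f` is `1`-Lipschitz with respect to the combinatorial distance. -/
def Lip1 (f : V → ℝ) : Prop := ∀ x y, |f x - f y| ≤ (G.dist x y : ℝ)

/-- The Ollivier curvature, via the limit-free formula
`κ(x,y) = inf {∇_{xy} Δ f : f ∈ Lip(1) ∩ C_c(V), ∇_{yx} f = 1}`. -/
noncomputable def curv (x y : V) : ℝ :=
  sInf { c | ∃ f : V → ℝ, G.Lip1 f ∧ (Function.support f).Finite ∧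
    f y - f x = (G.dist x y : ℝ) ∧ c = (G.lap f x - G.lap f y) / (G.dist x y : ℝ) }

-- ===================== auxiliary lemmas =====================

/-- neighbours of x as a Finset -/
noncomputable def nbr (x : V) : Finset V := (G.locFin x).toFinset

lemma mem_nbr {x z : V} : z ∈ G.nbr x ↔ G.w x z ≠ 0 := Set.Finite.mem_toFinset _

lemma lap_eq_sum (f : V → ℝ) (x : V) :
    G.lap f x = (∑ z ∈ G.nbr x, G.w x z * (f z - f x)) / G.m x := by
  unfold lap
  congr 1
  refine finsum_eq_sum_of_support_subset _ ?_
  intro z hz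
  have : G.w x z ≠ 0 := by
    intro h0; apply hz; simp [Function.mem_support, h0]
  simpa [nbr] using this

lemma lap_shift (f : V → ℝ) (c : ℝ) (x : V) :
    G.lap (fun v => f v - c) x = G.lap f x := by
  unfold lap
  congr 1
  apply finsum_congr; intro z; ring

lemma dist_comm' (u v : V) : G.dist u v = G.dist v u := SimpleGraph.dist_comm

lemma dist_triangle' (hconn : G.toSimple.Connected) (u v w : V) :
    G.dist u w ≤ G.dist u v + G.dist v w := hconn.dist_triangle

lemma dist_eq_one {u v : V} (h : G.toSimple.Adj u v) : G.dist u v = 1 :=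
  SimpleGraph.dist_eq_one_iff_adj.mpr h

lemma dist_eq_zero_iff (hconn : G.toSimple.Connected) {u v : V} :
    G.dist u v = 0 ↔ u = v := hconn.dist_eq_zero_iff

lemma adj_of_mem_nbr {x z : V} (h : z ∈ G.nbr x) : G.toSimple.Adj x z := by
  rw [mem_nbr] at h
  refine ⟨?_, h⟩
  rintro rfl
  exact h (G.loopless x)

lemma ball_finite (hconn : G.toSimple.Connected) (x : V) (n : ℕ) :
    {v | G.dist x v ≤ n}.Finite := by
  induction n with
  | zero =>
    refine Set.Finite.subset (Set.finite_singleton x) ?_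
    intro v hv
    simp only [Set.mem_setOf_eq, Nat.le_zero] at hv
    exact ((G.dist_eq_zero_iff hconn).mp hv).symm
  | succ n ih =>
    have hfib : ∀ z : V, {u | G.toSimple.Adj z u}.Finite := by
      intro z
      exact (G.locFin z).subset (fun u hu => hu.2)
    refine Set.Finite.subset (ih.union (Set.Finite.biUnion ih (fun z _ => hfib z))) ?_
    intro v hv
    simp only [Set.mem_setOf_eq] at hv
    rcases Nat.lt_or_ge (G.dist x v) (n+1) with h | h
    · exact Or.inl (Nat.lt_succ_iff.mp h)
    · have hd : G.dist x v = n + 1 := le_antisymm hv h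
      obtain ⟨p, hp⟩ := (hconn x v).exists_walk_length_eq_dist
      rw [show G.toSimple.dist x v = n + 1 from hd] at hp
      right
      -- take the reverse walk and peel one step
      rcases hq : p.reverse with _ | ⟨hadj, q⟩
      · exfalso
        have := congrArg SimpleGraph.Walk.length hq
        simp [hp] at this
      · rename_i z
        refine Set.mem_biUnion (x := z) ?_ ?_
        · have hlen : q.length = n := by
            have := congrArg SimpleGraph.Walk.length hq
            simp [hp] at this
            omega
          have : G.dist x z ≤ n := by
            have := SimpleGraph.dist_le q.reverse
            simpa [hlen, WeightedGraph.dist] using this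
          exact this
        · exact Set.mem_setOf_eq ▸ hadj.symm

lemma lip_abs_bound (f : V → ℝ) (hf : G.Lip1 f) {x z : V} (hz : z ∈ G.nbr x) :
    |f z - f x| ≤ 1 := by
  have := hf z x
  have hd : G.dist z x = 1 := by
    rw [G.dist_comm']; exact G.dist_eq_one (G.adj_of_mem_nbr hz)
  rw [hd] at this; exact_mod_cast this

lemma lap_bound (f : V → ℝ) (hf : G.Lip1 f) (x : V) :
    |G.lap f x| ≤ (∑ z ∈ G.nbr x, G.w x z) / G.m x := by
  rw [lap_eq_sum, abs_div, abs_of_pos (G.mpos x)]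
  refine (div_le_div_iff_of_pos_right (G.mpos x)).mpr ?_
  calc |∑ z ∈ G.nbr x, G.w x z * (f z - f x)|
      ≤ ∑ z ∈ G.nbr x, |G.w x z * (f z - f x)| := Finset.abs_sum_le_sum_abs _ _
    _ ≤ ∑ z ∈ G.nbr x, G.w x z := by
        apply Finset.sum_le_sum
        intro z hz
        rw [abs_mul, abs_of_nonneg (G.nonneg x z)]
        have h1 := G.lip_abs_bound f hf hz
        nlinarith [G.nonneg x z, abs_nonneg (f z - f x)]


open MeasureTheory in
lemma floor_integrableOn (a : ℝ) :
    MeasureTheory.IntegrableOn (fun θ : ℝ => ((⌊a + θ⌋ : ℤ) : ℝ)) (Set.Ico 0 1) := by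
  apply MeasureTheory.Measure.integrableOn_of_bounded (M := |a| + 1)
  · simp [Real.volume_Ico]
  · refine Measurable.aestronglyMeasurable ?_
    have h1 : Measurable fun θ : ℝ => ⌊a + θ⌋ :=
      Int.measurable_floor.comp (measurable_const.add measurable_id)
    exact (measurable_from_top (α := ℤ)).comp h1
  · refine (MeasureTheory.ae_restrict_iff' measurableSet_Ico).mpr (.of_forall ?_)
    intro θ hθ
    obtain ⟨h0, h1⟩ := hθ
    rw [Real.norm_eq_abs, abs_le]
    have hle := Int.floor_le (a + θ)
    have hlt := Int.sub_one_lt_floor (a + θ)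
    have := abs_nonneg a
    have := neg_abs_le a
    have := le_abs_self a
    constructor <;> linarith

open MeasureTheory in
lemma floor_integral (a : ℝ) :
    ∫ θ in Set.Ico (0:ℝ) 1, ((⌊a + θ⌋ : ℤ) : ℝ) = a := by
  set b := 1 - Int.fract a with hbdef
  have hfr0 := Int.fract_nonneg a
  have hfr1 := Int.fract_lt_one a
  have hfra : Int.fract a = a - ⌊a⌋ := (Int.self_sub_floor a).symm ▸ rfl
  have hb0 : (0:ℝ) ≤ b := by simp only [hbdef]; linarith
  have hb1 : b ≤ 1 := by simp only [hbdef]; linarith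
  have hsplit : Set.Ico (0:ℝ) b ∪ Set.Ico b 1 = Set.Ico (0:ℝ) 1 :=
    Set.Ico_union_Ico_eq_Ico hb0 hb1
  have hdisj : Disjoint (Set.Ico (0:ℝ) b) (Set.Ico b 1) :=
    Set.Ico_disjoint_Ico_same
  have int1 : IntegrableOn (fun θ : ℝ => ((⌊a + θ⌋ : ℤ) : ℝ)) (Set.Ico 0 b) :=
    (floor_integrableOn a).mono_set (by rw [← hsplit]; exact Set.subset_union_left)
  have int2 : IntegrableOn (fun θ : ℝ => ((⌊a + θ⌋ : ℤ) : ℝ)) (Set.Ico b 1) :=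
    (floor_integrableOn a).mono_set (by rw [← hsplit]; exact Set.subset_union_right)
  have e1 : ∫ θ in Set.Ico (0:ℝ) b, ((⌊a + θ⌋ : ℤ) : ℝ) = b * ⌊a⌋ := by
    rw [MeasureTheory.setIntegral_congr_fun measurableSet_Ico
      (g := fun _ => ((⌊a⌋ : ℤ) : ℝ)) ?_]
    · rw [MeasureTheory.setIntegral_const]
      simp [Real.volume_Ico, ENNReal.toReal_ofReal hb0, hb0]
    · intro θ hθ
      obtain ⟨h0, hlt⟩ := hθ
      have hfl := Int.floor_le a
      have : ⌊a + θ⌋ = ⌊a⌋ := by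
        rw [Int.floor_eq_iff]
        constructor
        · push_cast; linarith
        · push_cast; linarith
      simp only [this]
  have e2 : ∫ θ in Set.Ico b (1:ℝ), ((⌊a + θ⌋ : ℤ) : ℝ) = (1 - b) * (⌊a⌋ + 1) := by
    rw [MeasureTheory.setIntegral_congr_fun measurableSet_Ico
      (g := fun _ => ((⌊a⌋ : ℤ) : ℝ) + 1) ?_]
    · rw [MeasureTheory.setIntegral_const]
      have : (0:ℝ) ≤ 1 - b := by linarith
      simp [Real.volume_Ico, ENNReal.toReal_ofReal this, hb1]
    · intro θ hθ
      obtain ⟨h0, hlt⟩ := hθ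
      have hfl := Int.floor_le a
      have hlt2 := Int.lt_floor_add_one a
      have : ⌊a + θ⌋ = ⌊a⌋ + 1 := by
        rw [Int.floor_eq_iff]
        constructor
        · push_cast; linarith
        · push_cast; linarith
      simp only [this]; push_cast; ring
  rw [← hsplit, MeasureTheory.setIntegral_union hdisj measurableSet_Ico int1 int2, e1, e2]
  have : ((⌊a⌋ : ℤ) : ℝ) = a - Int.fract a := by rw [hfra]; ring
  rw [this]; simp only [hbdef]; ring

open MeasureTheory in
lemma lap_floor_integrableOn (f : V → ℝ) (x : V) :
    IntegrableOn (fun θ : ℝ => G.lap (fun v => ((⌊f v + θ⌋ : ℤ) : ℝ)) x) (Set.Ico 0 1) := by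
  simp only [lap_eq_sum]
  apply MeasureTheory.Integrable.div_const
  apply MeasureTheory.integrable_finset_sum
  intro z hz
  exact ((floor_integrableOn (f z)).sub (floor_integrableOn (f x))).const_mul _

open MeasureTheory in
lemma lap_floor_integral (f : V → ℝ) (x : V) :
    ∫ θ in Set.Ico (0:ℝ) 1, G.lap (fun v => ((⌊f v + θ⌋ : ℤ) : ℝ)) x = G.lap f x := by
  simp only [lap_eq_sum]
  rw [MeasureTheory.integral_div]
  congr 1
  rw [MeasureTheory.integral_finset_sum]
  · apply Finset.sum_congr rfl
    intro z hz
    rw [MeasureTheory.integral_const_mul,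
      MeasureTheory.integral_sub (floor_integrableOn (f z)) (floor_integrableOn (f x)),
      floor_integral, floor_integral]
  · intro z hz
    exact ((floor_integrableOn (f z)).sub (floor_integrableOn (f x))).const_mul _

open MeasureTheory in
lemma round_step {x y : V} (hadj : G.toSimple.Adj x y) (f : V → ℝ) (hLip : G.Lip1 f)
    (hfy : f y - f x = 1) :
    ∃ g : V → ℤ, (∀ u v, |g u - g v| ≤ (G.dist u v : ℤ)) ∧ g y - g x = 1 ∧
      G.lap (fun v => ((g v : ℤ) : ℝ)) x - G.lap (fun v => ((g v : ℤ) : ℝ)) y ≤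
        G.lap f x - G.lap f y := by
  set f1 : V → ℝ := fun v => f v - f x with hf1
  set F : ℝ → ℝ := fun θ =>
    G.lap (fun v => ((⌊f1 v + θ⌋ : ℤ) : ℝ)) x - G.lap (fun v => ((⌊f1 v + θ⌋ : ℤ) : ℝ)) y
      with hF
  have hInt : IntegrableOn F (Set.Ico (0:ℝ) 1) :=
    (G.lap_floor_integrableOn f1 x).sub (G.lap_floor_integrableOn f1 y)
  have hIeq : ∫ θ in Set.Ico (0:ℝ) 1, F θ = G.lap f x - G.lap f y := by
    rw [hF]
    rw [MeasureTheory.integral_sub (G.lap_floor_integrableOn f1 x)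
      (G.lap_floor_integrableOn f1 y), G.lap_floor_integral, G.lap_floor_integral]
    rw [hf1, G.lap_shift, G.lap_shift]
  have hvol : (volume (Set.Ico (0:ℝ) 1)) = 1 := by simp [Real.volume_Ico]
  obtain ⟨θ, hθ, hle⟩ := MeasureTheory.exists_le_setAverage (μ := volume)
    (s := Set.Ico (0:ℝ) 1) (by rw [hvol]; exact one_ne_zero) (by rw [hvol]; exact ENNReal.one_ne_top)
    hInt
  have havg : ⨍ θ in Set.Ico (0:ℝ) 1, F θ ∂volume = G.lap f x - G.lap f y := by
    rw [MeasureTheory.setAverage_eq, MeasureTheory.measureReal_def, hvol, ← hIeq]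
    simp
  rw [havg] at hle
  obtain ⟨hθ0, hθ1⟩ := hθ
  have key : ∀ a b : V, ⌊f1 a + θ⌋ - ⌊f1 b + θ⌋ ≤ (G.dist a b : ℤ) := by
    intro a b
    have hab : f1 a - f1 b ≤ (G.dist a b : ℝ) := by
      have := (abs_le.mp (hLip a b)).2
      simp only [hf1]; linarith
    have h3 : f1 a + θ ≤ (f1 b + θ) + ((G.dist a b : ℤ) : ℝ) := by push_cast; linarith
    have h4 : ⌊f1 a + θ⌋ ≤ ⌊(f1 b + θ) + ((G.dist a b : ℤ) : ℝ)⌋ := Int.floor_le_floor h3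
    rw [Int.floor_add_intCast] at h4
    omega
  refine ⟨fun v => ⌊f1 v + θ⌋, ?_, ?_, ?_⟩
  · intro u v
    show |⌊f1 u + θ⌋ - ⌊f1 v + θ⌋| ≤ (G.dist u v : ℤ)
    rw [abs_le]
    have hk1 := key u v
    have hk2 := key v u
    rw [G.dist_comm' v u] at hk2
    omega
  · show ⌊f1 y + θ⌋ - ⌊f1 x + θ⌋ = 1
    have hx1 : f1 x = 0 := by simp [hf1]
    have hy1 : f1 y = 1 := by simp only [hf1]; linarith
    rw [hx1, hy1, zero_add]
    have h0 : ⌊θ⌋ = 0 := Int.floor_eq_zero_iff.mpr ⟨hθ0, hθ1⟩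
    have h1 : ⌊θ + (1:ℝ)⌋ = ⌊θ⌋ + 1 := by
      have := Int.floor_add_intCast θ 1
      push_cast at this
      exact this
    rw [show (1:ℝ) + θ = θ + 1 by ring, h1, h0]
    norm_num
  · exact hle

lemma extend (hconn : G.toSimple.Connected) {x y : V} (hadj : G.toSimple.Adj x y)
    (f : V → ℤ)
    (hLip : ∀ u v, (G.dist x u ≤ 1 ∨ G.dist y u ≤ 1) → (G.dist x v ≤ 1 ∨ G.dist y v ≤ 1) →
      |f u - f v| ≤ (G.dist u v : ℤ))
    (hfy : f y - f x = 1) :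
    ∃ F : V → ℝ, G.Lip1 F ∧ (Function.support F).Finite ∧
      F y - F x = 1 ∧
      G.lap F x = G.lap (fun v => (f v : ℝ)) x ∧
      G.lap F y = G.lap (fun v => (f v : ℝ)) y := by
  classical
  set Bs : Set V := {u | G.dist x u ≤ 1 ∨ G.dist y u ≤ 1} with hBs
  have hxy1 : G.dist x y = 1 := G.dist_eq_one hadj
  have hdxx : G.dist x x = 0 := (G.dist_eq_zero_iff hconn).mpr rfl
  have hdyy : G.dist y y = 0 := (G.dist_eq_zero_iff hconn).mpr rfl
  have hB2 : ∀ u ∈ Bs, G.dist x u ≤ 2 := by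
    intro u hu
    rcases hu with h | h
    · omega
    · have := G.dist_triangle' hconn x y u
      omega
  have hBfin : Bs.Finite := (G.ball_finite hconn x 2).subset (fun u hu => hB2 u hu)
  set BF : Finset V := hBfin.toFinset with hBF
  have hmem : ∀ {u}, u ∈ BF ↔ u ∈ Bs := fun {u} => Set.Finite.mem_toFinset _
  have hxB : x ∈ BF := hmem.mpr (Or.inl (by omega))
  have hyB : y ∈ BF := hmem.mpr (Or.inr (by omega))
  have hne : BF.Nonempty := ⟨x, hxB⟩
  obtain ⟨u₀, hu₀B, hu₀⟩ := Finset.exists_mem_eq_inf' hne f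
  set f' : V → ℤ := fun v => f v - BF.inf' hne f with hf'
  have hW : ∀ u ∈ BF, 0 ≤ f' u := by
    intro u hu
    simp only [hf', sub_nonneg]
    exact Finset.inf'_le f hu
  have hUB : ∀ u ∈ BF, f' u ≤ 4 := by
    intro u hu
    have h1 := (abs_le.mp (hLip u u₀ (hmem.mp hu) (hmem.mp hu₀B))).2
    have hd : (G.dist u u₀ : ℤ) ≤ 4 := by
      have t1 := G.dist_triangle' hconn u x u₀
      have t2 : G.dist u x = G.dist x u := G.dist_comm' u x
      have b1 := hB2 u (hmem.mp hu)
      have b2 := hB2 u₀ (hmem.mp hu₀B)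
      have : G.dist u u₀ ≤ 4 := by omega
      exact_mod_cast this
    simp only [hf', hu₀]
    omega
  have hLipR : ∀ u v, u ∈ BF → v ∈ BF → (f' u : ℝ) - (f' v : ℝ) ≤ (G.dist u v : ℝ) := by
    intro u v hu hv
    have h1 := (abs_le.mp (hLip u v (hmem.mp hu) (hmem.mp hv))).2
    have h2 : f' u - f' v ≤ (G.dist u v : ℤ) := by simp only [hf']; omega
    exact_mod_cast h2
  set F : V → ℝ := fun v => max 0 (BF.sup' hne fun u => (f' u : ℝ) - (G.dist u v : ℝ))
    with hF
  have hsup_eq : ∀ v ∈ BF,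
      (BF.sup' hne fun u => (f' u : ℝ) - (G.dist u v : ℝ)) = (f' v : ℝ) := by
    intro v hv
    apply le_antisymm
    · apply Finset.sup'_le
      intro u hu
      have := hLipR u v hu hv
      linarith
    · have hle := Finset.le_sup' (f := fun u => (f' u : ℝ) - (G.dist u v : ℝ)) hv
      have hdvv : G.dist v v = 0 := (G.dist_eq_zero_iff hconn).mpr rfl
      simp only [hdvv, Nat.cast_zero, sub_zero] at hle; exact hle
  have hFB : ∀ v ∈ BF, F v = (f' v : ℝ) := by
    intro v hv
    simp only [hF, hsup_eq v hv]
    rw [max_eq_right]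
    exact_mod_cast hW v hv
  have hsup_lip : ∀ v₁ v₂ : V,
      (BF.sup' hne fun u => (f' u : ℝ) - (G.dist u v₁ : ℝ)) ≤
        (BF.sup' hne fun u => (f' u : ℝ) - (G.dist u v₂ : ℝ)) + (G.dist v₁ v₂ : ℝ) := by
    intro v₁ v₂
    apply Finset.sup'_le
    intro u hu
    have t : G.dist u v₂ ≤ G.dist u v₁ + G.dist v₁ v₂ := G.dist_triangle' hconn u v₁ v₂
    have t' : (G.dist u v₂ : ℝ) ≤ (G.dist u v₁ : ℝ) + (G.dist v₁ v₂ : ℝ) := by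
      exact_mod_cast t
    have hle := Finset.le_sup' (f := fun u => (f' u : ℝ) - (G.dist u v₂ : ℝ)) hu
    linarith
  have hLipF : G.Lip1 F := by
    intro u v
    have key : |(BF.sup' hne fun w => (f' w : ℝ) - (G.dist w u : ℝ)) -
        (BF.sup' hne fun w => (f' w : ℝ) - (G.dist w v : ℝ))| ≤ (G.dist u v : ℝ) := by
      rw [abs_le]
      constructor
      · have := hsup_lip v u
        have hc : (G.dist v u : ℝ) = (G.dist u v : ℝ) := by rw [G.dist_comm' v u]
        linarith
      · have := hsup_lip u v
        linarith
    calc |F u - F v|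
        = |max (BF.sup' hne fun w => (f' w : ℝ) - (G.dist w u : ℝ)) 0 -
            max (BF.sup' hne fun w => (f' w : ℝ) - (G.dist w v : ℝ)) 0| := by
          simp only [hF]; rw [max_comm, max_comm (0:ℝ)]
      _ ≤ _ := (abs_max_sub_max_le_abs _ _ _).trans key
  have hFyx : F y - F x = 1 := by
    rw [hFB y hyB, hFB x hxB]
    simp only [hf']
    push_cast
    have : (f y : ℝ) - (f x : ℝ) = 1 := by exact_mod_cast hfy
    linarith
  have hsupp : Function.support F ⊆ {v | G.dist x v ≤ 6} := by
    intro v hv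
    simp only [Function.mem_support, hF] at hv
    have hpos : 0 < BF.sup' hne fun u => (f' u : ℝ) - (G.dist u v : ℝ) := by
      by_contra h
      push_neg at h
      exact hv (max_eq_left h)
    obtain ⟨u, hu, hueq⟩ :=
      Finset.exists_mem_eq_sup' hne (fun u => (f' u : ℝ) - (G.dist u v : ℝ))
    rw [hueq] at hpos
    have h4 : ((f' u : ℤ) : ℝ) ≤ 4 := by exact_mod_cast hUB u hu
    have hd : (G.dist u v : ℝ) < 4 := by linarith
    have hd' : G.dist u v ≤ 4 := by
      have : (G.dist u v : ℝ) < ((4:ℕ) : ℝ) := by norm_num at hd ⊢; exact hd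
      exact_mod_cast this.le
    have hx2 := hB2 u (hmem.mp hu)
    have tri := G.dist_triangle' hconn x u v
    simp only [Set.mem_setOf_eq]
    omega
  have hsuppfin : (Function.support F).Finite :=
    (G.ball_finite hconn x 6).subset hsupp
  have hlap : ∀ p : V, p ∈ BF → (∀ z ∈ G.nbr p, z ∈ BF) →
      G.lap F p = G.lap (fun v => (f v : ℝ)) p := by
    intro p hp hz
    rw [lap_eq_sum, lap_eq_sum]
    congr 1
    apply Finset.sum_congr rfl
    intro z hzn
    rw [hFB z (hz z hzn), hFB p hp]
    simp only [hf']
    push_cast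
    ring
  have hnbrx : ∀ z ∈ G.nbr x, z ∈ BF := by
    intro z hz
    refine hmem.mpr (Or.inl ?_)
    rw [G.dist_eq_one (G.adj_of_mem_nbr hz)]
  have hnbry : ∀ z ∈ G.nbr y, z ∈ BF := by
    intro z hz
    refine hmem.mpr (Or.inr ?_)
    rw [G.dist_eq_one (G.adj_of_mem_nbr hz)]
  exact ⟨F, hLipF, hsuppfin, hFyx, hlap x hxB hnbrx, hlap y hyB hnbry⟩

lemma sInf_int {S : Set ℝ} (hS : ∀ c ∈ S, ∃ n : ℤ, c = (n : ℝ)) (hne : S.Nonempty)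
    (hbd : BddBelow S) : ∃ n : ℤ, sInf S = (n : ℝ) := by
  obtain ⟨c0, hc0⟩ := hne
  obtain ⟨n0, hn0⟩ := hS c0 hc0
  obtain ⟨b, hb⟩ := hbd
  have hTne : (n0 : ℝ) ∈ S := hn0 ▸ hc0
  have hTbd : ∀ n : ℤ, (n : ℝ) ∈ S → ⌈b⌉ ≤ n := fun n hn => Int.ceil_le.mpr (hb hn)
  obtain ⟨lb, hlbT, hlb⟩ := Int.exists_least_of_bdd (P := fun n : ℤ => (n : ℝ) ∈ S)
    ⟨⌈b⌉, fun z hz => hTbd z hz⟩ ⟨n0, hTne⟩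
  refine ⟨lb, le_antisymm (csInf_le ⟨b, hb⟩ hlbT) ?_⟩
  apply le_csInf ⟨c0, hc0⟩
  intro c hc
  obtain ⟨n, hn⟩ := hS c hc
  rw [hn]
  exact_mod_cast hlb n (by rw [← hn]; exact hc)

end WeightedGraph

/-- For adjacent vertices, the Ollivier curvature is computed by taking the infimum over
integer-valued 1-Lipschitz functions on `B_1(x) ∪ B_1(y)` with `f(y) - f(x) = 1`; consequently
on a combinatorial graph the curvature of adjacent vertices is an integer. -/
theorem stmt1 {V : Type} [Countable V] (G : WeightedGraph V)
    (hconn : G.toSimple.Connected) (x y : V) (hadj : G.toSimple.Adj x y) :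
    (G.curv x y = sInf { c : ℝ | ∃ f : V → ℤ,
        (∀ u v, (G.dist x u ≤ 1 ∨ G.dist y u ≤ 1) → (G.dist x v ≤ 1 ∨ G.dist y v ≤ 1) →
          |f u - f v| ≤ (G.dist u v : ℤ)) ∧
        f y - f x = 1 ∧
        c = G.lap (fun v => (f v : ℝ)) x - G.lap (fun v => (f v : ℝ)) y }) ∧
    ((∀ u v, G.w u v = 0 ∨ G.w u v = 1) → (∀ v, G.m v = 1) →
      ∃ n : ℤ, G.curv x y = (n : ℝ)) := by
  classical
  have hxy1 : G.dist x y = 1 := G.dist_eq_one hadj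
  have hdyy : G.dist y y = 0 := (G.dist_eq_zero_iff hconn).mpr rfl
  have hdyx : G.dist y x = 1 := by rw [G.dist_comm' y x]; exact hxy1
  set O : Set ℝ := { c | ∃ f : V → ℝ, G.Lip1 f ∧ (Function.support f).Finite ∧
    f y - f x = (G.dist x y : ℝ) ∧ c = (G.lap f x - G.lap f y) / (G.dist x y : ℝ) } with hO
  set R : Set ℝ := { c : ℝ | ∃ f : V → ℤ,
        (∀ u v, (G.dist x u ≤ 1 ∨ G.dist y u ≤ 1) → (G.dist x v ≤ 1 ∨ G.dist y v ≤ 1) →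
          |f u - f v| ≤ (G.dist u v : ℤ)) ∧
        f y - f x = 1 ∧
        c = G.lap (fun v => (f v : ℝ)) x - G.lap (fun v => (f v : ℝ)) y } with hR
  have hcurv : G.curv x y = sInf O := rfl
  have hsub : R ⊆ O := by
    rintro c ⟨f, hLip, hfy, hc⟩
    obtain ⟨F, h1, h2, h3, h4, h5⟩ := G.extend hconn hadj f hLip hfy
    refine ⟨F, h1, h2, ?_, ?_⟩
    · rw [hxy1]; simpa using h3
    · rw [hc, h4, h5, hxy1]; simp
  have hRne : R.Nonempty := by
    refine ⟨_, ⟨fun v => max 0 (1 - (G.dist y v : ℤ)), ?_, ?_, rfl⟩⟩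
    · intro u v _ _
      have t1 : G.dist y v ≤ G.dist y u + G.dist u v := G.dist_triangle' hconn y u v
      have t2 : G.dist y u ≤ G.dist y v + G.dist v u := G.dist_triangle' hconn y v u
      have t3 : G.dist v u = G.dist u v := G.dist_comm' v u
      calc |max 0 (1 - (G.dist y u : ℤ)) - max 0 (1 - (G.dist y v : ℤ))|
          = |max (1 - (G.dist y u : ℤ)) 0 - max (1 - (G.dist y v : ℤ)) 0| := by
            rw [max_comm, max_comm (0:ℤ)]
        _ ≤ |(1 - (G.dist y u : ℤ)) - (1 - (G.dist y v : ℤ))| :=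
            abs_max_sub_max_le_abs _ _ _
        _ ≤ (G.dist u v : ℤ) := by rw [abs_le]; omega
    · simp [hdyy, hdyx]
  have hOne : O.Nonempty := hRne.mono hsub
  have hObd : BddBelow O := by
    refine ⟨-((∑ z ∈ G.nbr x, G.w x z) / G.m x + (∑ z ∈ G.nbr y, G.w y z) / G.m y), ?_⟩
    rintro c ⟨f, hLip, -, -, hc⟩
    rw [hc, hxy1]
    push_cast
    rw [div_one]
    have b1 := abs_le.mp (G.lap_bound f hLip x)
    have b2 := abs_le.mp (G.lap_bound f hLip y)
    linarith [b1.1, b2.2]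
  have hRbd : BddBelow R := hObd.mono hsub
  have hle : ∀ c ∈ O, sInf R ≤ c := by
    rintro c ⟨f, hLip, hsupp, hfy, hc⟩
    rw [hxy1] at hfy hc
    rw [Nat.cast_one] at hfy
    rw [Nat.cast_one, div_one] at hc
    obtain ⟨g, hg1, hg2, hg3⟩ := G.round_step hadj f hLip hfy
    have hmem : (G.lap (fun v => (g v : ℝ)) x - G.lap (fun v => (g v : ℝ)) y) ∈ R :=
      ⟨g, fun u v _ _ => hg1 u v, hg2, rfl⟩
    exact (csInf_le hRbd hmem).trans (by rw [hc]; exact hg3)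
  have part1 : G.curv x y = sInf R := by
    rw [hcurv]
    exact le_antisymm (csInf_le_csInf hObd hRne hsub) (le_csInf hOne hle)
  refine ⟨part1, ?_⟩
  intro hw hm
  rw [part1]
  apply WeightedGraph.sInf_int ?_ hRne hRbd
  rintro c ⟨f, -, -, hc⟩
  have hsum : ∀ p : V, (∑ z ∈ G.nbr p, G.w p z * ((f z : ℝ) - (f p : ℝ)))
      = ((∑ z ∈ G.nbr p, (f z - f p) : ℤ) : ℝ) := by
    intro p
    push_cast
    apply Finset.sum_congr rfl
    intro z hz
    have hw1 : G.w p z = 1 := (hw p z).resolve_left (G.mem_nbr.mp hz)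
    rw [hw1, one_mul]
  refine ⟨(∑ z ∈ G.nbr x, (f z - f x)) - ∑ z ∈ G.nbr y, (f z - f y), ?_⟩
  rw [hc, WeightedGraph.lap_eq_sum, WeightedGraph.lap_eq_sum, hm x, hm y, div_one, div_one,
    hsum x, hsum y]
  push_cast
  ring
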